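/- For all k, l ≥ 1 with k + l = n: if h is an invariant character of gl_k(𝔽_q) × gl_l(𝔽_q), then R^n_{k,l}(h) is a ℚ_{≥0}-linear combination of invariant characters of gl_n(𝔽_q); and if f is an invariant character of gl_n(𝔽_q), then *R^n_{k,l}(f) is a ℚ_{≥0}-linear combination of invariant characters of gl_k(𝔽_q) × gl_l(𝔽_q). -/

import Mathlib

open Matrix BigOperators

namespace HCPaper

open scoped Classical

/-- `gl F n` : the additive group of `n × n` matrices over `F`. -/
abbrev gl (F : Type) (n : ℕ) := Matrix (Fin n) (Fin n) F

variable {F : Type} [Field F] [Fintype F] [DecidableEq F]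

/-- Conjugation (adjoint) action of `GL_n(F)` on `gl_n(F)`. -/
def conjM {n : ℕ} (g : Matrix.GeneralLinearGroup (Fin n) F) (x : gl F n) : gl F n :=
  (g : Matrix (Fin n) (Fin n) F) * x * ((g⁻¹ : Matrix.GeneralLinearGroup (Fin n) F) : Matrix (Fin n) (Fin n) F)

/-- A function `f : gl_n(F) → ℂ` is invariant if it is constant on `GL_n(F)`-conjugacy orbits. -/
def Invariant (n : ℕ) (f : gl F n → ℂ) : Prop :=
  ∀ (g : Matrix.GeneralLinearGroup (Fin n) F) (x : gl F n), f (conjM g x) = f x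

/-- Invariance for functions on `gl_k(F) × gl_l(F)` under `GL_k(F) × GL_l(F)`. -/
def Invariant₂ (k l : ℕ) (h : gl F k × gl F l → ℂ) : Prop :=
  ∀ (g₁ : Matrix.GeneralLinearGroup (Fin k) F) (g₂ : Matrix.GeneralLinearGroup (Fin l) F)
    (x : gl F k) (y : gl F l), h (conjM g₁ x, conjM g₂ y) = h (x, y)

/-- Transport of matrices along an equality of sizes. -/
def castM {m n : ℕ} (h : m = n) (x : gl F m) : gl F n :=
  Matrix.reindex (finCongr h) (finCongr h) x

/-- Transport of functions along an equality of sizes. -/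
def castFun {m n : ℕ} (h : m = n) (f : gl F m → ℂ) : gl F n → ℂ :=
  fun x => f (castM h.symm x)

/-- The block upper-triangular matrix `[x u; 0 y]`, viewed in `gl_{k+l}(F)`. -/
def but (k l : ℕ) (x : gl F k) (u : Matrix (Fin k) (Fin l) F) (y : gl F l) : gl F (k + l) :=
  Matrix.reindex finSumFinEquiv finSumFinEquiv (Matrix.fromBlocks x u 0 y)

/-- The block lower-triangular matrix `[x 0; v y]`, viewed in `gl_{k+l}(F)`. -/
def blt (k l : ℕ) (x : gl F k) (v : Matrix (Fin l) (Fin k) F) (y : gl F l) : gl F (k + l) :=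
  Matrix.reindex finSumFinEquiv finSumFinEquiv (Matrix.fromBlocks x 0 v y)

/-- View a matrix in `gl_{k+l}(F)` as a `2 × 2`-block matrix. -/
def blk (k l : ℕ) (m : gl F (k + l)) : Matrix (Fin k ⊕ Fin l) (Fin k ⊕ Fin l) F :=
  Matrix.reindex finSumFinEquiv.symm finSumFinEquiv.symm m

/-- Membership in `P_{k,l}` : being block upper triangular with blocks of sizes `k, l`. -/
def IsBUT (k l : ℕ) (m : gl F (k + l)) : Prop := Matrix.toBlocks₂₁ (blk k l m) = 0

/-- The projection `π : P_{k,l} → gl_k(F) × gl_l(F)` deleting the off-diagonal block. -/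
def proj (k l : ℕ) (m : gl F (k + l)) : gl F k × gl F l :=
  (Matrix.toBlocks₁₁ (blk k l m), Matrix.toBlocks₂₂ (blk k l m))

/-- The order of the group `P^×_{k,l}` of invertible block upper-triangular matrices. -/
noncomputable def Pcard (F : Type) [Field F] [Fintype F] [DecidableEq F] (k l : ℕ) : ℕ :=
  Nat.card {g : Matrix.GeneralLinearGroup (Fin (k + l)) F //
    IsBUT k l (g : Matrix (Fin (k + l)) (Fin (k + l)) F)}

/-- Harish-Chandra restriction `*R^{k+l}_{k,l}`; by convention it is the identity
(under the canonical identifications) when `k = 0` or `l = 0`. -/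
noncomputable def HCres (k l : ℕ) (f : gl F (k + l) → ℂ) : gl F k × gl F l → ℂ :=
  if hk : k = 0 then fun p => f (castM (by omega) p.2)
  else if hl : l = 0 then fun p => f (castM (by omega) p.1)
  else fun p =>
    ((Fintype.card F : ℂ) ^ (k * l))⁻¹ * ∑ u : Matrix (Fin k) (Fin l) F, f (but k l p.1 u p.2)

/-- Harish-Chandra induction `R^{k+l}_{k,l}`; by convention it is the identity
(under the canonical identifications) when `k = 0` or `l = 0`. -/
noncomputable def HCind (k l : ℕ) (h : gl F k × gl F l → ℂ) : gl F (k + l) → ℂ :=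
  if hk : k = 0 then fun z => h (0, castM (by omega) z)
  else if hl : l = 0 then fun z => h (castM (by omega) z, 0)
  else fun z =>
    ((Pcard F k l : ℂ))⁻¹ *
      ∑ g : Matrix.GeneralLinearGroup (Fin (k + l)) F,
        if IsBUT k l (conjM g z) then h (proj k l (conjM g z)) else 0

/-- The hermitian inner product on `C_n`. -/
noncomputable def inn (n : ℕ) (f g : gl F n → ℂ) : ℂ :=
  ((Fintype.card (Matrix.GeneralLinearGroup (Fin n) F) : ℂ))⁻¹ *
    ∑ x : gl F n, f x * (starRingEnd ℂ) (g x)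

/-- The hermitian inner product on invariant functions on `gl_k(F) × gl_l(F)`. -/
noncomputable def inn₂ (k l : ℕ) (f g : gl F k × gl F l → ℂ) : ℂ :=
  ((Fintype.card (Matrix.GeneralLinearGroup (Fin k) F) *
      Fintype.card (Matrix.GeneralLinearGroup (Fin l) F) : ℂ))⁻¹ *
    ∑ p : gl F k × gl F l, f p * (starRingEnd ℂ) (g p)

/-- `f ∈ C_n` is pre-cuspidal if all proper Harish-Chandra restrictions of `f` vanish. -/
def PreCuspidal (n : ℕ) (f : gl F n → ℂ) : Prop :=
  ∀ (k l : ℕ), 1 ≤ k → 1 ≤ l → ∀ hkl : k + l = n, HCres k l (castFun hkl.symm f) = 0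

/-- The composite `R_{(n_1,…,n_r)} ∘ *R_{(n_1,…,n_r)}` of the iterated two-block
Harish-Chandra induction and restriction along the composition `(n_1,…,n_r)`. -/
noncomputable def RcompRes : (L : List ℕ) → (gl F L.sum → ℂ) → gl F L.sum → ℂ
  | [], f => f
  | (k :: L), f =>
      castFun (List.sum_cons).symm
        (HCind k L.sum fun p =>
          RcompRes L (fun y => HCres k L.sum (castFun List.sum_cons f) (p.1, y)) p.2)

/-- The duality operation `𝒟_n(f) = Σ_{(n_1,…,n_r) ⊨ n} (-1)^{n-r}
R_{(n_1,…,n_r)}(*R_{(n_1,…,n_r)} f)`, the sum over all compositions of `n`. -/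
noncomputable def Dual (n : ℕ) (f : gl F n → ℂ) : gl F n → ℂ :=
  ∑ c : Composition n,
    ((-1 : ℂ)) ^ (n - c.length) •
      castFun c.blocks_sum (RcompRes c.blocks (castFun c.blocks_sum.symm f))

/-- `C_n`, the subspace of invariant functions, as a `ℂ`-submodule of all functions. -/
noncomputable def InvSub (F : Type) [Field F] (n : ℕ) : Submodule ℂ (gl F n → ℂ) where
  carrier := {f | Invariant n f}
  add_mem' := by
    intro a b ha hb g x
    simp only [Pi.add_apply]
    rw [ha g x, hb g x]
  zero_mem' := by intro g x; rfl
  smul_mem' := by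
    intro c f hf g x
    simp only [Pi.smul_apply]
    rw [hf g x]

/-- `χ` is the character of a finite-dimensional complex representation of the
additive group `gl_n(F)`. -/
def IsChar (n : ℕ) (χ : gl F n → ℂ) : Prop :=
  ∃ V : FDRep ℂ (Multiplicative (gl F n)),
    ∀ x : gl F n, FDRep.character V (Multiplicative.ofAdd x) = χ x

/-- An invariant character of `gl_n(F)`. -/
def IsInvChar (n : ℕ) (χ : gl F n → ℂ) : Prop := IsChar n χ ∧ Invariant n χ

/-- A character of the additive group `gl_k(F) × gl_l(F)`. -/
def IsChar₂ (k l : ℕ) (χ : gl F k × gl F l → ℂ) : Prop :=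
  ∃ V : FDRep ℂ (Multiplicative (gl F k × gl F l)),
    ∀ p : gl F k × gl F l, FDRep.character V (Multiplicative.ofAdd p) = χ p

/-- An invariant character of `gl_k(F) × gl_l(F)`. -/
def IsInvChar₂ (k l : ℕ) (χ : gl F k × gl F l → ℂ) : Prop := IsChar₂ k l χ ∧ Invariant₂ k l χ

/-- An irreducible invariant character: a nonzero invariant character which is not
the sum of two nonzero invariant characters. -/
def IrrInvChar (n : ℕ) (χ : gl F n → ℂ) : Prop :=
  IsInvChar n χ ∧ χ ≠ 0 ∧
    ¬ ∃ χ₁ χ₂ : gl F n → ℂ, IsInvChar n χ₁ ∧ IsInvChar n χ₂ ∧ χ₁ ≠ 0 ∧ χ₂ ≠ 0 ∧ χ = χ₁ + χ₂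

set_option maxHeartbeats 1000000
set_option linter.unusedSectionVars false


/-- Generic: χ is a character of the additive group A. -/
def IsCharAdd (A : Type) [AddCommGroup A] (χ : A → ℂ) : Prop :=
  ∃ V : FDRep ℂ (Multiplicative A),
    ∀ x : A, FDRep.character V (Multiplicative.ofAdd x) = χ x

lemma isCharAdd_zero (A : Type) [AddCommGroup A] : IsCharAdd A (fun _ => 0) := by
  refine ⟨FDRep.of (V := (⊥ : Submodule ℂ ℂ))
      (1 : Representation ℂ (Multiplicative A) (⊥ : Submodule ℂ ℂ)), fun x => ?_⟩
  rw [FDRep.character]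
  show LinearMap.trace ℂ (⊥ : Submodule ℂ ℂ)
      ((1 : Representation ℂ (Multiplicative A) (⊥ : Submodule ℂ ℂ)) (Multiplicative.ofAdd x)) = 0
  rw [MonoidHom.one_apply, LinearMap.trace_one, finrank_bot, Nat.cast_zero]

lemma isCharAdd_add {A : Type} [AddCommGroup A] {χ₁ χ₂ : A → ℂ}
    (h₁ : IsCharAdd A χ₁) (h₂ : IsCharAdd A χ₂) :
    IsCharAdd A (fun x => χ₁ x + χ₂ x) := by
  obtain ⟨V₁, hV₁⟩ := h₁
  obtain ⟨V₂, hV₂⟩ := h₂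
  let ρp : Representation ℂ (Multiplicative A) (V₁ × V₂) :=
    { toFun := fun g => (V₁.ρ g).prodMap (V₂.ρ g)
      map_one' := by
        show (V₁.ρ 1).prodMap (V₂.ρ 1) = 1
        rw [_root_.map_one, _root_.map_one, LinearMap.prodMap_one]
      map_mul' := fun g g' => by
        show (V₁.ρ (g * g')).prodMap (V₂.ρ (g * g')) =
          ((V₁.ρ g).prodMap (V₂.ρ g)) * ((V₁.ρ g').prodMap (V₂.ρ g'))
        rw [_root_.map_mul, _root_.map_mul, LinearMap.prodMap_mul] }
  refine ⟨FDRep.of ρp, fun x => ?_⟩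
  have h := LinearMap.trace_prodMap' (V₁.ρ (Multiplicative.ofAdd x)) (V₂.ρ (Multiplicative.ofAdd x))
  rw [show (fun x => χ₁ x + χ₂ x) x = χ₁ x + χ₂ x from rfl, ← hV₁ x, ← hV₂ x]
  exact h

lemma isCharAdd_sum {A : Type} [AddCommGroup A] {ι : Type} (s : Finset ι) (χ : ι → A → ℂ)
    (h : ∀ i ∈ s, IsCharAdd A (χ i)) : IsCharAdd A (fun x => ∑ i ∈ s, χ i x) := by
  induction s using Finset.cons_induction with
  | empty => simpa using isCharAdd_zero A
  | cons a s ha ih =>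
      simp only [Finset.sum_cons]
      exact isCharAdd_add (h a (Finset.mem_cons_self _ _))
        (ih fun i hi => h i (Finset.mem_cons_of_mem hi))

lemma isCharAdd_mul_comp {A B C : Type} [AddCommGroup A] [AddCommGroup B] [AddCommGroup C]
    (ψ : AddChar C ℂ) (m : A →+ C) (φ : A →+ B) {χ : B → ℂ} (hχ : IsCharAdd B χ) :
    IsCharAdd A (fun z => ψ (m z) * χ (φ z)) := by
  obtain ⟨W, hW⟩ := hχ
  let ρs : Representation ℂ (Multiplicative A) W :=
    { toFun := fun g => ψ (m g.toAdd) • W.ρ (Multiplicative.ofAdd (φ g.toAdd))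
      map_one' := by
        show ψ (m (Multiplicative.toAdd 1)) • W.ρ (Multiplicative.ofAdd (φ (Multiplicative.toAdd 1))) = 1
        rw [toAdd_one, m.map_zero, φ.map_zero, AddChar.map_zero_eq_one, ofAdd_zero,
          _root_.map_one, one_smul]
      map_mul' := fun g g' => by
        show ψ (m (g * g').toAdd) • W.ρ (Multiplicative.ofAdd (φ (g * g').toAdd)) =
          (ψ (m g.toAdd) • W.ρ (Multiplicative.ofAdd (φ g.toAdd))) *
            (ψ (m g'.toAdd) • W.ρ (Multiplicative.ofAdd (φ g'.toAdd)))
        rw [toAdd_mul, m.map_add, φ.map_add, AddChar.map_add_eq_mul, ofAdd_add,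
          _root_.map_mul, smul_mul_smul_comm] }
  refine ⟨FDRep.of ρs, fun x => ?_⟩
  have h : FDRep.character (FDRep.of ρs) (Multiplicative.ofAdd x)
      = ψ (m x) * LinearMap.trace ℂ W (W.ρ (Multiplicative.ofAdd (φ x))) := by
    show LinearMap.trace ℂ W ((ρs (Multiplicative.ofAdd x))) = _
    show LinearMap.trace ℂ W (ψ (m (Multiplicative.toAdd (Multiplicative.ofAdd x))) •
      W.ρ (Multiplicative.ofAdd (φ (Multiplicative.toAdd (Multiplicative.ofAdd x))))) = _
    rw [toAdd_ofAdd, _root_.map_smul, smul_eq_mul]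
  rw [h]
  show _ = ψ (m x) * χ (φ x)
  rw [← hW (φ x)]
  rfl


section Aux
variable {F : Type} [Field F] [Fintype F] [DecidableEq F]

lemma conjM_conjM {n : ℕ} (g g' : Matrix.GeneralLinearGroup (Fin n) F) (x : gl F n) :
    conjM g (conjM g' x) = conjM (g * g') x := by
  simp [conjM, Units.val_mul, _root_.mul_inv_rev, Matrix.mul_assoc]

lemma conjM_add {n : ℕ} (g : Matrix.GeneralLinearGroup (Fin n) F) (x y : gl F n) :
    conjM g (x + y) = conjM g x + conjM g y := by
  simp [conjM, Matrix.mul_add, Matrix.add_mul]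

lemma blk_add (k l : ℕ) (a b : gl F (k + l)) :
    blk k l (a + b) = blk k l a + blk k l b := by
  ext i j
  simp [blk, Matrix.reindex_apply, Matrix.submatrix_apply]

lemma toBlocks₂₁_add {k l : ℕ} (a b : Matrix (Fin k ⊕ Fin l) (Fin k ⊕ Fin l) F) :
    (a + b).toBlocks₂₁ = a.toBlocks₂₁ + b.toBlocks₂₁ := by
  ext i j
  simp [Matrix.toBlocks₂₁]

lemma proj_add (k l : ℕ) (a b : gl F (k + l)) :
    proj k l (a + b) = proj k l a + proj k l b := by
  unfold proj
  rw [blk_add]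
  refine Prod.ext ?_ ?_ <;> ext i j <;>
    simp [Matrix.toBlocks₁₁, Matrix.toBlocks₂₂]

lemma but_add (k l : ℕ) (x x' : gl F k) (u u' : Matrix (Fin k) (Fin l) F) (y y' : gl F l) :
    but k l x u y + but k l x' u' y' = but k l (x + x') (u + u') (y + y') := by
  unfold but
  ext i j
  rcases h1 : finSumFinEquiv.symm i with a | a <;> rcases h2 : finSumFinEquiv.symm j with b | b <;>
    simp [Matrix.reindex_apply, Matrix.submatrix_apply, Matrix.add_apply, h1, h2]

lemma but_zero (k l : ℕ) : but k l (0 : gl F k) 0 (0 : gl F l) = 0 := by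
  unfold but
  ext i j
  simp [Matrix.reindex_apply, Matrix.submatrix_apply, Matrix.fromBlocks]
  cases finSumFinEquiv.symm i <;> cases finSumFinEquiv.symm j <;> simp

/-- block-diagonal element of `GL_{k+l}`. -/
def dgl {k l : ℕ} (g₁ : Matrix.GeneralLinearGroup (Fin k) F)
    (g₂ : Matrix.GeneralLinearGroup (Fin l) F) :
    Matrix.GeneralLinearGroup (Fin (k + l)) F where
  val := Matrix.reindex finSumFinEquiv finSumFinEquiv
    (Matrix.fromBlocks (g₁ : Matrix (Fin k) (Fin k) F) 0 0 (g₂ : Matrix (Fin l) (Fin l) F))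
  inv := Matrix.reindex finSumFinEquiv finSumFinEquiv
    (Matrix.fromBlocks ((g₁⁻¹ : Matrix.GeneralLinearGroup (Fin k) F) : Matrix (Fin k) (Fin k) F) 0 0
      ((g₂⁻¹ : Matrix.GeneralLinearGroup (Fin l) F) : Matrix (Fin l) (Fin l) F))
  val_inv := by
    rw [Matrix.reindex_apply, Matrix.reindex_apply, Matrix.submatrix_mul_equiv,
      Matrix.fromBlocks_multiply, Units.mul_inv, Units.mul_inv]
    simp only [Matrix.zero_mul, Matrix.mul_zero, add_zero, zero_add, Matrix.fromBlocks_one,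
      Matrix.submatrix_one_equiv]
  inv_val := by
    rw [Matrix.reindex_apply, Matrix.reindex_apply, Matrix.submatrix_mul_equiv,
      Matrix.fromBlocks_multiply, Units.inv_mul, Units.inv_mul]
    simp only [Matrix.zero_mul, Matrix.mul_zero, add_zero, zero_add, Matrix.fromBlocks_one,
      Matrix.submatrix_one_equiv]

lemma conj_but {k l : ℕ} (g₁ : Matrix.GeneralLinearGroup (Fin k) F)
    (g₂ : Matrix.GeneralLinearGroup (Fin l) F) (x : gl F k)
    (u : Matrix (Fin k) (Fin l) F) (y : gl F l) :
    conjM (dgl g₁ g₂) (but k l x u y)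
      = but k l (conjM g₁ x)
          ((g₁ : Matrix (Fin k) (Fin k) F) * u *
            ((g₂⁻¹ : Matrix.GeneralLinearGroup (Fin l) F) : Matrix (Fin l) (Fin l) F))
          (conjM g₂ y) := by
  show (dgl g₁ g₂ : Matrix (Fin (k+l)) (Fin (k+l)) F) * (but k l x u y) *
      (((dgl g₁ g₂)⁻¹ : Matrix.GeneralLinearGroup (Fin (k+l)) F) : Matrix (Fin (k+l)) (Fin (k+l)) F) = _
  rw [show ((dgl g₁ g₂)⁻¹ : Matrix.GeneralLinearGroup (Fin (k+l)) F) = _ from Units.inv_mk _ _ _ _]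
  show Matrix.reindex finSumFinEquiv finSumFinEquiv (Matrix.fromBlocks _ 0 0 _) *
      Matrix.reindex finSumFinEquiv finSumFinEquiv (Matrix.fromBlocks x u 0 y) *
      Matrix.reindex finSumFinEquiv finSumFinEquiv (Matrix.fromBlocks _ 0 0 _) = _
  rw [Matrix.reindex_apply, Matrix.reindex_apply, Matrix.reindex_apply,
    Matrix.submatrix_mul_equiv, Matrix.submatrix_mul_equiv, Matrix.fromBlocks_multiply,
    Matrix.fromBlocks_multiply]
  unfold but conjM
  rw [Matrix.reindex_apply]
  congr 1
  simp [Matrix.mul_assoc]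

end Aux



lemma card_mat' (F : Type) [Fintype F] [DecidableEq F] (a b : ℕ) :
    Fintype.card (Matrix (Fin a) (Fin b) F) = Fintype.card F ^ (a * b) := by
  rw [Fintype.card_congr (Matrix.of (m := Fin a) (n := Fin b) (α := F)).symm,
    Fintype.card_fun, Fintype.card_fun, Fintype.card_fin, Fintype.card_fin, ← pow_mul,
    Nat.mul_comm]

section HCresAux
variable {F : Type} [Field F] [Fintype F] [DecidableEq F]

lemma but_add' (k l : ℕ) (x x' : gl F k) (y y' : gl F l) :
    but k l (x + x') 0 (y + y') = but k l x (0 : Matrix (Fin k) (Fin l) F) y + but k l x' 0 y' := by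
  rw [but_add, add_zero]

lemma isChar₂_HCres (k l : ℕ) (hk : k ≠ 0) (hl : l ≠ 0) (f : gl F (k + l) → ℂ)
    (hf : IsCharAdd (gl F (k + l)) f) : IsChar₂ k l (HCres k l f) := by
  obtain ⟨V, hV⟩ := hf
  set q : ℂ := ((Fintype.card F : ℂ) ^ (k * l)) with hqdef
  have hq0 : q ≠ 0 := pow_ne_zero _ (Nat.cast_ne_zero.mpr Fintype.card_ne_zero)
  set σ : Matrix (Fin k) (Fin l) F → (V →ₗ[ℂ] V) :=
    fun u => V.ρ (Multiplicative.ofAdd (but k l 0 u 0)) with hσdef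
  have hσmul : ∀ u v, σ u * σ v = σ (u + v) := fun u v => by
    rw [hσdef]
    show V.ρ _ * V.ρ _ = V.ρ _
    rw [← _root_.map_mul, ← ofAdd_add, but_add, zero_add, zero_add]
  set S : V →ₗ[ℂ] V := ∑ u : Matrix (Fin k) (Fin l) F, σ u with hSdef
  have hcard : (Fintype.card (Matrix (Fin k) (Fin l) F) : ℂ) = q := by
    rw [card_mat' F k l, hqdef]; push_cast; ring
  have hSS : S * S = q • S := by
    have h1 : ∀ u, σ u * S = S := fun u => by
      rw [hSdef, Finset.mul_sum]
      rw [Finset.sum_congr rfl (fun v _ => hσmul u v)]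
      exact Fintype.sum_equiv (Equiv.addLeft u) _ _ (fun v => rfl)
    rw [hSdef, Finset.sum_mul, Finset.sum_congr rfl (fun u _ => h1 u), Finset.sum_const,
      Finset.card_univ, ← Nat.cast_smul_eq_nsmul (R := ℂ), hcard]
  set e : V →ₗ[ℂ] V := q⁻¹ • S with hedef
  have hee : e * e = e := by
    rw [hedef, smul_mul_smul_comm, hSS, smul_smul]
    congr 1
    field_simp
  have hcomm : ∀ a : Multiplicative (gl F (k + l)), V.ρ a * e = e * V.ρ a := fun a => by
    rw [hedef, mul_smul_comm, smul_mul_assoc]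
    congr 1
    rw [hSdef, Finset.mul_sum, Finset.sum_mul]
    refine Finset.sum_congr rfl fun u _ => ?_
    rw [hσdef]
    show V.ρ a * V.ρ _ = V.ρ _ * V.ρ a
    rw [← _root_.map_mul, ← _root_.map_mul, mul_comm]
  set W : Submodule ℂ V := LinearMap.range e with hWdef
  have hfix : ∀ w : V, w ∈ W → e w = w := by
    rintro w ⟨v, rfl⟩
    show e (e v) = e v
    rw [← Module.End.mul_apply, hee]
  set p : V →ₗ[ℂ] W := e.rangeRestrict with hpdef
  set i : (W : Submodule ℂ V) →ₗ[ℂ] V := W.subtype with hidef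
  have hip : i ∘ₗ p = e := rfl
  set d : gl F k × gl F l → Multiplicative (gl F (k + l)) :=
    fun pr => Multiplicative.ofAdd (but k l pr.1 0 pr.2) with hddef
  have hd : ∀ a b : gl F k × gl F l, V.ρ (d (a + b)) = V.ρ (d a) * V.ρ (d b) := fun a b => by
    rw [hddef]
    show V.ρ (Multiplicative.ofAdd (but k l (a.1 + b.1) 0 (a.2 + b.2))) = _
    rw [but_add', ofAdd_add, _root_.map_mul]
  let τ : Representation ℂ (Multiplicative (gl F k × gl F l)) W :=
    { toFun := fun gp => p ∘ₗ (V.ρ (d gp.toAdd) ∘ₗ i)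
      map_one' := by
        show p ∘ₗ (V.ρ (Multiplicative.ofAdd (but k l (0 : gl F k) 0 (0 : gl F l))) ∘ₗ i) = 1
        rw [but_zero, ofAdd_zero, _root_.map_one, Module.End.one_eq_id, LinearMap.id_comp]
        refine LinearMap.ext fun w => Subtype.ext ?_
        exact hfix _ w.2
      map_mul' := fun a b => by
        refine LinearMap.ext fun w => Subtype.ext ?_
        have h1 : e (V.ρ (d b.toAdd) (w : V)) = V.ρ (d b.toAdd) (w : V) := by
          have h2 := LinearMap.congr_fun (hcomm (d b.toAdd)) (w : V)
          rw [Module.End.mul_apply, Module.End.mul_apply] at h2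
          rw [← h2, hfix _ w.2]
        show e (V.ρ (d (a.toAdd + b.toAdd)) (w : V))
            = e (V.ρ (d a.toAdd) (e (V.ρ (d b.toAdd) (w : V))))
        rw [h1, hd, Module.End.mul_apply]
    }
  refine ⟨FDRep.of τ, fun pr => ?_⟩
  have hch : FDRep.character (FDRep.of τ) (Multiplicative.ofAdd pr)
      = LinearMap.trace ℂ W (p ∘ₗ (V.ρ (d pr) ∘ₗ i)) := rfl
  rw [hch, LinearMap.trace_comp_comm' (V.ρ (d pr) ∘ₗ i) p, LinearMap.comp_assoc, hip]
  have hmul : V.ρ (d pr) ∘ₗ e = q⁻¹ • ∑ u : Matrix (Fin k) (Fin l) F,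
      V.ρ (Multiplicative.ofAdd (but k l pr.1 u pr.2)) := by
    rw [← Module.End.mul_eq_comp, hedef, mul_smul_comm, hSdef, Finset.mul_sum]
    congr 1
    refine Finset.sum_congr rfl fun u _ => ?_
    rw [hddef, hσdef]
    show V.ρ _ * V.ρ _ = V.ρ _
    rw [← _root_.map_mul, ← ofAdd_add, but_add, add_zero, zero_add, add_zero]
  rw [hmul, _root_.map_smul, map_sum, smul_eq_mul]
  have : ∀ u : Matrix (Fin k) (Fin l) F,
      LinearMap.trace ℂ V (V.ρ (Multiplicative.ofAdd (but k l pr.1 u pr.2)))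
        = f (but k l pr.1 u pr.2) := fun u => hV _
  rw [Finset.sum_congr rfl fun u _ => this u]
  show _ = HCres k l f pr
  unfold HCres
  rw [dif_neg hk, dif_neg hl]

lemma invariant₂_HCres (k l : ℕ) (hk : k ≠ 0) (hl : l ≠ 0) (f : gl F (k + l) → ℂ)
    (hinv : Invariant (k + l) f) : Invariant₂ k l (HCres k l f) := by
  intro g₁ g₂ x y
  have hrw : HCres k l f = fun pr : gl F k × gl F l =>
      ((Fintype.card F : ℂ) ^ (k * l))⁻¹ * ∑ u : Matrix (Fin k) (Fin l) F,
        f (but k l pr.1 u pr.2) := by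
    unfold HCres
    rw [dif_neg hk, dif_neg hl]
  rw [hrw]
  dsimp only
  congr 1
  let eU : Matrix (Fin k) (Fin l) F ≃ Matrix (Fin k) (Fin l) F :=
    { toFun := fun u => (g₁ : Matrix (Fin k) (Fin k) F) * u *
        ((g₂⁻¹ : Matrix.GeneralLinearGroup (Fin l) F) : Matrix (Fin l) (Fin l) F)
      invFun := fun u => ((g₁⁻¹ : Matrix.GeneralLinearGroup (Fin k) F) : Matrix (Fin k) (Fin k) F) * u *
        (g₂ : Matrix (Fin l) (Fin l) F)
      left_inv := fun u => by
        show (↑g₁⁻¹ : Matrix (Fin k) (Fin k) F) * ((↑g₁ : Matrix (Fin k) (Fin k) F) * u *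
          (↑g₂⁻¹ : Matrix (Fin l) (Fin l) F)) * (↑g₂ : Matrix (Fin l) (Fin l) F) = u
        have : (↑g₁⁻¹ : Matrix (Fin k) (Fin k) F) * ((↑g₁ : Matrix (Fin k) (Fin k) F) * u *
            (↑g₂⁻¹ : Matrix (Fin l) (Fin l) F)) * (↑g₂ : Matrix (Fin l) (Fin l) F)
            = ((↑g₁⁻¹ : Matrix (Fin k) (Fin k) F) * (↑g₁ : Matrix (Fin k) (Fin k) F)) * u *
              ((↑g₂⁻¹ : Matrix (Fin l) (Fin l) F) * (↑g₂ : Matrix (Fin l) (Fin l) F)) := by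
          simp only [Matrix.mul_assoc]
        rw [this, Units.inv_mul, Units.inv_mul, Matrix.one_mul, Matrix.mul_one]
      right_inv := fun u => by
        show (↑g₁ : Matrix (Fin k) (Fin k) F) * ((↑g₁⁻¹ : Matrix (Fin k) (Fin k) F) * u *
          (↑g₂ : Matrix (Fin l) (Fin l) F)) * (↑g₂⁻¹ : Matrix (Fin l) (Fin l) F) = u
        have : (↑g₁ : Matrix (Fin k) (Fin k) F) * ((↑g₁⁻¹ : Matrix (Fin k) (Fin k) F) * u *
            (↑g₂ : Matrix (Fin l) (Fin l) F)) * (↑g₂⁻¹ : Matrix (Fin l) (Fin l) F)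
            = ((↑g₁ : Matrix (Fin k) (Fin k) F) * (↑g₁⁻¹ : Matrix (Fin k) (Fin k) F)) * u *
              ((↑g₂ : Matrix (Fin l) (Fin l) F) * (↑g₂⁻¹ : Matrix (Fin l) (Fin l) F)) := by
          simp only [Matrix.mul_assoc]
        rw [this, Units.mul_inv, Units.mul_inv, Matrix.one_mul, Matrix.mul_one] }
  calc ∑ u : Matrix (Fin k) (Fin l) F, f (but k l (conjM g₁ x) u (conjM g₂ y))
      = ∑ u : Matrix (Fin k) (Fin l) F, f (but k l (conjM g₁ x) (eU u) (conjM g₂ y)) :=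
        (Equiv.sum_comp eU (fun u => f (but k l (conjM g₁ x) u (conjM g₂ y)))).symm
    _ = ∑ u : Matrix (Fin k) (Fin l) F, f (conjM (dgl g₁ g₂) (but k l x u y)) := by
        refine Finset.sum_congr rfl fun u _ => ?_
        rw [conj_but]
        rfl
    _ = ∑ u : Matrix (Fin k) (Fin l) F, f (but k l x u y) :=
        Finset.sum_congr rfl fun u _ => hinv (dgl g₁ g₂) _

end HCresAux

/-- Harish-Chandra induction and restriction take invariant characters to
`ℚ_{≥0}`-linear combinations of invariant characters. -/
theorem HC_nonneg_rat_combinations (F : Type) [Field F] [Fintype F] [DecidableEq F]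
    (k l : ℕ) (hk : 1 ≤ k) (hl : 1 ≤ l) :
    (∀ h : gl F k × gl F l → ℂ, IsInvChar₂ k l h →
      ∃ (r : ℕ) (co : Fin r → ℚ) (χ : Fin r → (gl F (k + l) → ℂ)),
        (∀ i, 0 ≤ co i) ∧ (∀ i, IsInvChar (k + l) (χ i)) ∧
          HCind k l h = ∑ i, (co i : ℂ) • χ i) ∧
    (∀ f : gl F (k + l) → ℂ, IsInvChar (k + l) f →
      ∃ (r : ℕ) (co : Fin r → ℚ) (χ : Fin r → (gl F k × gl F l → ℂ)),
        (∀ i, 0 ≤ co i) ∧ (∀ i, IsInvChar₂ k l (χ i)) ∧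
          HCres k l f = ∑ i, (co i : ℂ) • χ i) := by
  have hk0 : k ≠ 0 := by omega
  have hl0 : l ≠ 0 := by omega
  constructor
  · -- Harish-Chandra induction
    intro h hh
    obtain ⟨hchar, -⟩ := hh
    set X : gl F (k + l) → ℂ := fun z =>
      ∑ g : Matrix.GeneralLinearGroup (Fin (k + l)) F,
        ∑ ψ : AddChar (Matrix (Fin l) (Fin k) F) ℂ,
          ψ ((blk k l (conjM g z)).toBlocks₂₁) * h (proj k l (conjM g z)) with hXdef
    have hXchar : IsCharAdd (gl F (k + l)) X := by
      apply isCharAdd_sum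
      intro g _
      apply isCharAdd_sum
      intro ψ _
      exact isCharAdd_mul_comp ψ
        (AddMonoidHom.mk' (fun z => (blk k l (conjM g z)).toBlocks₂₁)
          (fun a b => by rw [conjM_add, blk_add, toBlocks₂₁_add]))
        (AddMonoidHom.mk' (fun z => proj k l (conjM g z))
          (fun a b => by rw [conjM_add, proj_add]))
        hchar
    have hXinv : Invariant (k + l) X := by
      intro g₀ z
      rw [hXdef]
      refine Fintype.sum_equiv (Equiv.mulRight g₀) _ _ (fun g => ?_)
      rw [conjM_conjM]
      rfl
    set Q : ℕ := Fintype.card (Matrix (Fin l) (Fin k) F) with hQdef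
    have hQ0 : (Q : ℂ) ≠ 0 := Nat.cast_ne_zero.mpr Fintype.card_ne_zero
    refine ⟨1, fun _ => ((Pcard F k l : ℚ) * (Q : ℚ))⁻¹, fun _ => X,
      fun _ => by positivity, fun _ => ⟨hXchar, hXinv⟩, ?_⟩
    rw [Fin.sum_univ_one]
    have hdef : HCind k l h = fun z => ((Pcard F k l : ℂ))⁻¹ *
        ∑ g : Matrix.GeneralLinearGroup (Fin (k + l)) F,
          (if IsBUT k l (conjM g z) then h (proj k l (conjM g z)) else 0) := by
      unfold HCind
      rw [dif_neg hk0, dif_neg hl0]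
    rw [hdef]
    funext z
    have hXz : X z = (Q : ℂ) * ∑ g : Matrix.GeneralLinearGroup (Fin (k + l)) F,
        (if IsBUT k l (conjM g z) then h (proj k l (conjM g z)) else 0) := by
      rw [hXdef, Finset.mul_sum]
      refine Finset.sum_congr rfl (fun g _ => ?_)
      rw [← Finset.sum_mul, AddChar.sum_apply_eq_ite, ← hQdef]
      by_cases hc : (blk k l (conjM g z)).toBlocks₂₁ = 0
      · rw [if_pos hc, if_pos (show IsBUT k l (conjM g z) from hc)]
      · rw [if_neg hc, if_neg (show ¬ IsBUT k l (conjM g z) from hc), zero_mul, mul_zero]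
    dsimp only
    rw [Pi.smul_apply, smul_eq_mul, hXz]
    push_cast
    rw [mul_inv]
    rw [show ((Pcard F k l : ℂ))⁻¹ * ((Q : ℂ))⁻¹ * ((Q : ℂ) *
        ∑ g : Matrix.GeneralLinearGroup (Fin (k + l)) F,
          (if IsBUT k l (conjM g z) then h (proj k l (conjM g z)) else 0))
        = ((Pcard F k l : ℂ))⁻¹ * (((Q : ℂ))⁻¹ * (Q : ℂ)) *
          ∑ g : Matrix.GeneralLinearGroup (Fin (k + l)) F,
            (if IsBUT k l (conjM g z) then h (proj k l (conjM g z)) else 0) from by ring]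
    rw [inv_mul_cancel₀ hQ0, mul_one]
  · -- Harish-Chandra restriction
    intro f hf
    obtain ⟨hchar, hinv⟩ := hf
    refine ⟨1, fun _ => 1, fun _ => HCres k l f, fun _ => zero_le_one,
      fun _ => ⟨isChar₂_HCres k l hk0 hl0 f hchar, invariant₂_HCres k l hk0 hl0 f hinv⟩, ?_⟩
    rw [Fin.sum_univ_one]
    norm_num

end HCPaper
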